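/- For positive reals α and β, the partial derivative of the Beta function B(α,β) = ∫₀¹ x^(α-1)(1-x)^(β-1) dx with respect to α equals B(α,β)·(ψ(α) − ψ(α+β)), where ψ is the digamma function. Equivalently, ∫₀¹ x^(α-1)(1-x)^(β-1) ln x dx = B(α,β)(ψ(α) − ψ(α+β)). -/

import Mathlib

open MeasureTheory Real

/-- The digamma function `ψ = Γ'/Γ`. -/
noncomputable def digamma (x : ℝ) : ℝ := deriv Real.Gamma x / Real.Gamma x

/-- The Beta function `B(α,β) = ∫₀¹ x^(α-1)(1-x)^(β-1) dx`. -/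
noncomputable def betaFun (α β : ℝ) : ℝ :=
  ∫ x in Set.Ioo (0 : ℝ) 1, x ^ (α - 1) * (1 - x) ^ (β - 1)

lemma beta_integrand_integrable {c d : ℝ} (hc : 0 < c) (hd : 0 < d) :
    IntegrableOn (fun x : ℝ => x ^ (c - 1) * (1 - x) ^ (d - 1)) (Set.Ioo 0 1) := by
  have h := (Complex.betaIntegral_convergent (u := (c : ℂ)) (v := (d : ℂ))
    (by simpa using hc) (by simpa using hd)).1
  have h2 : IntegrableOn (fun x : ℝ => (x : ℂ) ^ ((c : ℂ) - 1) * ((1 : ℂ) - x) ^ ((d : ℂ) - 1))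
      (Set.Ioo 0 1) := h.mono_set Set.Ioo_subset_Ioc_self
  have h3 : IntegrableOn (fun x : ℝ => ‖(x : ℂ) ^ ((c : ℂ) - 1) * ((1 : ℂ) - x) ^ ((d : ℂ) - 1)‖)
      (Set.Ioo 0 1) := h2.norm
  refine (h3.congr_fun (fun x hx => ?_) measurableSet_Ioo)
  obtain ⟨hx0, hx1⟩ := hx
  have h1x : (0 : ℝ) < 1 - x := by linarith
  have e1 : ((1 : ℂ) - x) = ((1 - x : ℝ) : ℂ) := by push_cast; ring
  beta_reduce
  rw [norm_mul, e1,
    Complex.norm_cpow_eq_rpow_re_of_pos hx0, Complex.norm_cpow_eq_rpow_re_of_pos h1x]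
  norm_num

lemma betaFun_eq_Gamma {c d : ℝ} (hc : 0 < c) (hd : 0 < d) :
    betaFun c d = Real.Gamma c * Real.Gamma d / Real.Gamma (c + d) := by
  have key := Complex.Gamma_mul_Gamma_eq_betaIntegral (s := (c : ℂ)) (t := (d : ℂ))
    (by simpa using hc) (by simpa using hd)
  have hbi : Complex.betaIntegral (c : ℂ) (d : ℂ) = ((betaFun c d : ℝ) : ℂ) := by
    rw [Complex.betaIntegral, intervalIntegral.integral_of_le zero_le_one,
      MeasureTheory.integral_Ioc_eq_integral_Ioo]
    rw [show (∫ x in Set.Ioo (0:ℝ) 1, (x : ℂ) ^ ((c : ℂ) - 1) * ((1:ℂ) - x) ^ ((d : ℂ) - 1))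
        = ∫ x in Set.Ioo (0:ℝ) 1, ((x ^ (c - 1) * (1 - x) ^ (d - 1) : ℝ) : ℂ) from
      MeasureTheory.setIntegral_congr_fun measurableSet_Ioo (fun x hx => by
        obtain ⟨hx0, hx1⟩ := hx
        have h1x : (0 : ℝ) < 1 - x := by linarith
        have e1 : ((1 : ℂ) - x) = ((1 - x : ℝ) : ℂ) := by push_cast; ring
        rw [e1, show ((c:ℂ)-1) = ((c-1:ℝ):ℂ) by push_cast; ring,
          show ((d:ℂ)-1) = ((d-1:ℝ):ℂ) by push_cast; ring,
          ← Complex.ofReal_cpow hx0.le, ← Complex.ofReal_cpow h1x.le, ← Complex.ofReal_mul])]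
    rw [betaFun]
    exact integral_ofReal
  rw [hbi, ← Complex.ofReal_add, Complex.Gamma_ofReal, Complex.Gamma_ofReal,
    Complex.Gamma_ofReal, ← Complex.ofReal_mul, ← Complex.ofReal_mul] at key
  have := Complex.ofReal_injective key
  have hne : Real.Gamma (c + d) ≠ 0 := (Real.Gamma_pos_of_pos (by linarith)).ne'
  field_simp
  linarith [this]

lemma log_abs_bound {c x : ℝ} (hc : 0 < c) (hx0 : 0 < x) (hx1 : x < 1) :
    x ^ (c - 1) * |Real.log x| ≤ (2 / c) * x ^ (c / 2 - 1) := by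
  have hlog : |Real.log x| = -Real.log x := by
    rw [abs_of_nonpos (Real.log_nonpos hx0.le hx1.le)]
  have hb : -Real.log x ≤ (2 / c) * x ^ (-(c / 2)) := by
    have h1 : -Real.log x = Real.log x⁻¹ := (Real.log_inv x).symm
    have h2 : Real.log x⁻¹ = (2 / c) * Real.log (x⁻¹ ^ (c / 2)) := by
      rw [Real.log_rpow (inv_pos.mpr hx0)]
      field_simp
    have h3 : Real.log (x⁻¹ ^ (c / 2)) ≤ x⁻¹ ^ (c / 2) - 1 :=
      Real.log_le_sub_one_of_pos (Real.rpow_pos_of_pos (inv_pos.mpr hx0) _)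
    have h4 : x⁻¹ ^ (c / 2) = x ^ (-(c / 2)) := by
      rw [Real.inv_rpow hx0.le, ← Real.rpow_neg hx0.le]
    calc -Real.log x = (2 / c) * Real.log (x⁻¹ ^ (c / 2)) := by rw [h1, h2]
      _ ≤ (2 / c) * (x⁻¹ ^ (c / 2) - 1) := by
          apply mul_le_mul_of_nonneg_left h3 (by positivity)
      _ ≤ (2 / c) * x ^ (-(c / 2)) := by
          rw [h4]; nlinarith [Real.rpow_pos_of_pos hx0 (-(c/2)), div_pos (by norm_num : (0:ℝ)<2) hc]
  calc x ^ (c - 1) * |Real.log x| ≤ x ^ (c - 1) * ((2 / c) * x ^ (-(c / 2))) := by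
        rw [hlog]; exact mul_le_mul_of_nonneg_left hb (by positivity)
    _ = (2 / c) * x ^ (c / 2 - 1) := by
        rw [show x ^ (c - 1) * ((2 / c) * x ^ (-(c / 2))) =
          (2 / c) * (x ^ (c - 1) * x ^ (-(c / 2))) from by ring, ← Real.rpow_add hx0]
        congr 2
        ring

theorem beta_deriv_digamma (α β : ℝ) (hα : 0 < α) (hβ : 0 < β) :
    (∫ x in Set.Ioo (0 : ℝ) 1, x ^ (α - 1) * (1 - x) ^ (β - 1) * Real.log x) =
      betaFun α β * (digamma α - digamma (α + β)) ∧
    HasDerivAt (fun a => betaFun a β)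
      (betaFun α β * (digamma α - digamma (α + β))) α := by
  have hΓne : ∀ {y : ℝ}, 0 < y → Real.Gamma y ≠ 0 := fun hy => (Real.Gamma_pos_of_pos hy).ne'
  have hdiff : ∀ {y : ℝ}, 0 < y → DifferentiableAt ℝ Real.Gamma y := fun {y} hy =>
    Real.differentiableAt_Gamma (fun m => ne_of_gt (lt_of_le_of_lt (neg_nonpos.mpr (Nat.cast_nonneg m)) hy))
  -- derivative of the Gamma quotient
  have hαβ : 0 < α + β := by linarith
  have h1 : HasDerivAt (fun a => Real.Gamma a * Real.Gamma β)
      (deriv Real.Gamma α * Real.Gamma β) α := (hdiff hα).hasDerivAt.mul_const _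
  have h2 : HasDerivAt (fun a => Real.Gamma (a + β)) (deriv Real.Gamma (α + β)) α := by
    have := ((hdiff hαβ).hasDerivAt.comp α ((hasDerivAt_id α).add_const β))
    simpa [Function.comp_def] using this
  have hG : HasDerivAt (fun a => Real.Gamma a * Real.Gamma β / Real.Gamma (a + β))
      (betaFun α β * (digamma α - digamma (α + β))) α := by
    have h3 := h1.div h2 (hΓne hαβ)
    refine h3.congr_deriv ?_
    rw [betaFun_eq_Gamma hα hβ]
    simp only [digamma]
    field_simp [hΓne hα, hΓne hαβ]
  have hEq : (fun a => betaFun a β) =ᶠ[nhds α] fun a => Real.Gamma a * Real.Gamma β / Real.Gamma (a + β) := by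
    filter_upwards [eventually_gt_nhds hα] with a ha
    exact betaFun_eq_Gamma ha hβ
  have hBder : HasDerivAt (fun a => betaFun a β)
      (betaFun α β * (digamma α - digamma (α + β))) α := hG.congr_of_eventuallyEq hEq
  -- differentiation under the integral sign
  set μ : Measure ℝ := volume.restrict (Set.Ioo 0 1) with hμ
  have hmeas : ∀ a : ℝ, AEStronglyMeasurable (fun x : ℝ => x ^ (a - 1) * (1 - x) ^ (β - 1)) μ := by
    intro a
    apply Measurable.aestronglyMeasurable
    fun_prop
  have hmeas' : AEStronglyMeasurable (fun x : ℝ => x ^ (α - 1) * (1 - x) ^ (β - 1) * Real.log x) μ := by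
    exact ((by fun_prop : Measurable fun x : ℝ => x ^ (α - 1) * (1 - x) ^ (β - 1)).mul
      Real.measurable_log).aestronglyMeasurable
  have hbound_int : Integrable (fun x : ℝ => (4 / α) * (x ^ (α / 4 - 1) * (1 - x) ^ (β - 1))) μ :=
    (beta_integrand_integrable (by positivity) hβ).const_mul _
  have key := hasDerivAt_integral_of_dominated_loc_of_deriv_le (μ := μ)
    (F := fun a x => x ^ (a - 1) * (1 - x) ^ (β - 1))
    (F' := fun a x => x ^ (a - 1) * (1 - x) ^ (β - 1) * Real.log x)
    (x₀ := α) (s := Metric.ball α (α / 2))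
    (bound := fun x => (4 / α) * (x ^ (α / 4 - 1) * (1 - x) ^ (β - 1)))
    (Metric.ball_mem_nhds α (by positivity))
    (Filter.Eventually.of_forall hmeas)
    (beta_integrand_integrable hα hβ)
    hmeas'
    (by
      rw [ae_restrict_iff' measurableSet_Ioo]
      refine Filter.Eventually.of_forall (fun x hx => ?_)
      intro a ha
      obtain ⟨hx0, hx1⟩ := hx
      have h1x : (0 : ℝ) < 1 - x := by linarith
      have ha2 : α / 2 < a := by
        have ha' : |a - α| < α / 2 := by rwa [Metric.mem_ball, Real.dist_eq] at ha
        have := abs_lt.mp ha'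
        linarith [this.1]
      have hx_pow : x ^ (a - 1) ≤ x ^ (α / 2 - 1) :=
        Real.rpow_le_rpow_of_exponent_ge hx0 hx1.le (by linarith)
      have hlb := log_abs_bound (c := α / 2) (by positivity) hx0 hx1
      calc ‖x ^ (a - 1) * (1 - x) ^ (β - 1) * Real.log x‖
          = x ^ (a - 1) * |Real.log x| * (1 - x) ^ (β - 1) := by
            rw [norm_mul, norm_mul, Real.norm_eq_abs, Real.norm_eq_abs, Real.norm_eq_abs,
              abs_of_nonneg (Real.rpow_nonneg hx0.le _), abs_of_nonneg (Real.rpow_nonneg h1x.le _)]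
            ring
        _ ≤ x ^ (α / 2 - 1) * |Real.log x| * (1 - x) ^ (β - 1) := by
            have : (0:ℝ) ≤ |Real.log x| * (1 - x) ^ (β - 1) := by positivity
            nlinarith [abs_nonneg (Real.log x), Real.rpow_nonneg h1x.le (β - 1)]
        _ ≤ ((2 / (α / 2)) * x ^ (α / 2 / 2 - 1)) * (1 - x) ^ (β - 1) := by
            apply mul_le_mul_of_nonneg_right hlb (Real.rpow_nonneg h1x.le _)
        _ = (4 / α) * (x ^ (α / 4 - 1) * (1 - x) ^ (β - 1)) := by
            rw [show α / 2 / 2 = α / 4 by ring, show (2:ℝ) / (α / 2) = 4 / α by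
              field_simp
              norm_num]
            ring)
    hbound_int
    (by
      rw [ae_restrict_iff' measurableSet_Ioo]
      refine Filter.Eventually.of_forall (fun x hx => ?_)
      intro a _
      obtain ⟨hx0, hx1⟩ := hx
      have hd : HasDerivAt (fun a' : ℝ => x ^ (a' - 1)) (x ^ (a - 1) * Real.log x) a := by
        have := ((Real.hasStrictDerivAt_const_rpow hx0 (a - 1)).hasDerivAt.comp a
          ((hasDerivAt_id a).sub_const 1))
        simpa [Function.comp_def] using this
      have := hd.mul_const ((1 - x) ^ (β - 1))
      refine this.congr_deriv ?_
      ring)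
  have hder2 : HasDerivAt (fun a => betaFun a β)
      (∫ x in Set.Ioo (0:ℝ) 1, x ^ (α - 1) * (1 - x) ^ (β - 1) * Real.log x) α := by
    simpa only [betaFun] using key.2
  have huniq := hder2.unique hBder
  exact ⟨huniq, hBder⟩
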